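/- Every customer attraction game in which all agents have weight 1 (the strategy spaces and node values may be arbitrary) possesses a pure Nash equilibrium. -/

import Mathlib

open Finset

/-- A customer attraction game: nodes `N` with integer values `≥ 1`, agents `A`
with integer weights `≥ 1`, and a nonempty finite strategy space (a finite set of
subsets of `N`) for each agent. -/
structure CAG (N A : Type*) [Fintype N] [Fintype A] where
  v : N → ℕ
  v_pos : ∀ j, 1 ≤ v j
  w : A → ℕ
  w_pos : ∀ i, 1 ≤ w i
  strat : A → Finset (Finset N)
  strat_ne : ∀ i, (strat i).Nonempty

variable {N A : Type*} [Fintype N] [Fintype A] [DecidableEq N]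

/-- The load `c(j,S)` of node `j`: total weight of agents attracting `j`. -/
def CAG.load (G : CAG N A) (S : A → Finset N) (j : N) : ℕ :=
  ∑ i : A, if j ∈ S i then G.w i else 0

/-- The utility `U_i(S) = ∑_{j ∈ S_i} v_j · w_i / c(j,S)`. -/
noncomputable def CAG.util (G : CAG N A) (S : A → Finset N) (i : A) : ℝ :=
  ∑ j ∈ S i, (G.v j : ℝ) * (G.w i : ℝ) / (G.load S j : ℝ)

/-- A strategy profile: each agent plays a strategy from her strategy space. -/
def CAG.valid (G : CAG N A) (S : A → Finset N) : Prop :=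
  ∀ i, S i ∈ G.strat i

/-- Pure Nash equilibrium. -/
def CAG.PNE [DecidableEq A] (G : CAG N A) (S : A → Finset N) : Prop :=
  G.valid S ∧ ∀ i, ∀ S' ∈ G.strat i, G.util (Function.update S i S') i ≤ G.util S i

/-- Social welfare. -/
noncomputable def CAG.sw (G : CAG N A) (S : A → Finset N) : ℝ :=
  ∑ i : A, G.util S i

/-- The harmonic number `H_c = ∑_{k=1}^{c} 1/k`. -/
noncomputable def harm (c : ℕ) : ℝ := ∑ k ∈ Finset.range c, (1 : ℝ) / (k + 1)

/-- Rosenthal-type potential `Φ(S) = ∑_j v_j ∑_{k=1}^{c(j,S)} 1/k`. -/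
noncomputable def CAG.pot (G : CAG N A) (S : A → Finset N) : ℝ :=
  ∑ j : N, (G.v j : ℝ) * harm (G.load S j)

/-- Every customer attraction game in which all agents have weight 1
possesses a pure Nash equilibrium. -/
lemma pot_decomp [DecidableEq A] (G : CAG N A) (hw : ∀ i, G.w i = 1)
    (S : A → Finset N) (i : A) :
    G.pot S = (∑ j : N, (G.v j : ℝ) *
        harm (∑ k ∈ Finset.univ.erase i, if j ∈ S k then G.w k else 0))
      + G.util S i := by
  have hload : ∀ j, G.load S j
      = (∑ k ∈ Finset.univ.erase i, if j ∈ S k then G.w k else 0)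
        + (if j ∈ S i then 1 else 0) := by
    intro j
    unfold CAG.load
    rw [← Finset.sum_erase_add _ _ (Finset.mem_univ i), hw]
  unfold CAG.pot CAG.util
  have hutil : (∑ j ∈ S i, (G.v j : ℝ) * (G.w i : ℝ) / (G.load S j : ℝ))
      = ∑ j : N, if j ∈ S i then (G.v j : ℝ) * (G.w i : ℝ) / (G.load S j : ℝ) else 0 := by
    rw [Finset.sum_ite_mem, Finset.univ_inter]
  rw [hutil, ← Finset.sum_add_distrib]
  refine Finset.sum_congr rfl fun j _ => ?_
  set d := ∑ k ∈ Finset.univ.erase i, if j ∈ S k then G.w k else 0 with hd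
  by_cases hj : j ∈ S i
  · have hl : G.load S j = d + 1 := by rw [hload j]; simp [hj, hd]
    have hharm : harm (d + 1) = harm d + 1 / (d + 1 : ℝ) := by
      unfold harm
      rw [Finset.sum_range_succ]
    rw [hl, if_pos hj, hharm, hw i]
    have : ((d + 1 : ℕ) : ℝ) = (d : ℝ) + 1 := by push_cast; ring
    rw [this]
    ring
  · have hl : G.load S j = d := by rw [hload j]; simp [hj, hd]
    rw [hl, if_neg hj, add_zero]

theorem exists_PNE_unit_weights [DecidableEq A] [Nonempty N] [Nonempty A]
    (G : CAG N A) (hw : ∀ i, G.w i = 1) :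
    ∃ S : A → Finset N, G.PNE S := by
  have hne : (Fintype.piFinset G.strat).Nonempty :=
    ⟨fun i => (G.strat_ne i).choose,
      Fintype.mem_piFinset.mpr fun i => (G.strat_ne i).choose_spec⟩
  obtain ⟨S, hS, hmax⟩ := Finset.exists_max_image (Fintype.piFinset G.strat) G.pot hne
  have hvalid : G.valid S := fun i => Fintype.mem_piFinset.mp hS i
  refine ⟨S, hvalid, fun i S' hS' => ?_⟩
  set T := Function.update S i S' with hT
  have hTmem : T ∈ Fintype.piFinset G.strat := by
    refine Fintype.mem_piFinset.mpr fun k => ?_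
    by_cases hk : k = i
    · subst hk; simpa [hT] using hS'
    · simpa [hT, Function.update_of_ne hk] using hvalid k
  have hpot : G.pot T ≤ G.pot S := hmax T hTmem
  have h1 := pot_decomp G hw S i
  have h2 := pot_decomp G hw T i
  have hsame : (∑ j : N, (G.v j : ℝ) *
        harm (∑ k ∈ Finset.univ.erase i, if j ∈ T k then G.w k else 0))
      = ∑ j : N, (G.v j : ℝ) *
        harm (∑ k ∈ Finset.univ.erase i, if j ∈ S k then G.w k else 0) := by
    refine Finset.sum_congr rfl fun j _ => ?_
    congr 1
    refine congrArg harm (Finset.sum_congr rfl fun k hk => ?_)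
    rw [hT, Function.update_of_ne (Finset.ne_of_mem_erase hk)]
  rw [h2, hsame] at hpot
  rw [h1] at hpot
  linarith
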